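/- If G is a graph on n vertices containing no copy of C_5 (the cycle on 5 vertices), then the number of triangles in G is at most 2m/3, where m is the number of edges of G. -/

import Mathlib

open Finset
set_option maxHeartbeats 2000000


lemma keyD {V : Type*} [DecidableEq V] (G : SimpleGraph V) [DecidableRel G.Adj]
    (s : Finset V)
    (hP4 : ∀ a ∈ s, ∀ b ∈ s, ∀ c ∈ s, ∀ d ∈ s, G.Adj a b → G.Adj b c → G.Adj c d →
        a ≠ c → b ≠ d → a = d) :
    ∑ x ∈ s, (s.filter (G.Adj x)).card ≤ 2 * s.card := by
  induction s using Finset.strongInduction with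
  | _ s IH =>
  rcases s.eq_empty_or_nonempty with rfl | ⟨u0, hu0⟩
  · simp
  by_cases hlow : ∃ u ∈ s, (s.filter (G.Adj u)).card ≤ 1
  · obtain ⟨u, hu, hdeg⟩ := hlow
    set s' := s.erase u with hs'
    have hsub : s' ⊂ s := Finset.erase_ssubset hu
    have hP4' : ∀ a ∈ s', ∀ b ∈ s', ∀ c ∈ s', ∀ d ∈ s', G.Adj a b → G.Adj b c → G.Adj c d →
        a ≠ c → b ≠ d → a = d := fun a ha b hb c hc d hd =>
      hP4 a (mem_of_mem_erase ha) b (mem_of_mem_erase hb) c (mem_of_mem_erase hc)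
        d (mem_of_mem_erase hd)
    have ih := IH s' hsub hP4'
    have hins : s = insert u s' := (Finset.insert_erase hu).symm
    have hunotin : u ∉ s' := Finset.notMem_erase u s
    have hsplit : ∀ x ∈ s', (s.filter (G.Adj x)).card
        = (s'.filter (G.Adj x)).card + (if G.Adj x u then 1 else 0) := by
      intro x hx
      rw [hins, Finset.filter_insert]
      split
      · rw [Finset.card_insert_of_notMem (fun h => hunotin (Finset.mem_filter.1 h).1)]
      · simp
    have hsum : ∑ x ∈ s, (s.filter (G.Adj x)).card
        = (s.filter (G.Adj u)).card + ∑ x ∈ s', (s.filter (G.Adj x)).card := by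
      rw [hins, Finset.sum_insert hunotin]
    have hsum2 : ∑ x ∈ s', (s.filter (G.Adj x)).card
        = ∑ x ∈ s', (s'.filter (G.Adj x)).card + ∑ x ∈ s', (if G.Adj x u then 1 else 0) := by
      rw [← Finset.sum_add_distrib]
      exact Finset.sum_congr rfl hsplit
    have hback : ∑ x ∈ s', (if G.Adj x u then 1 else 0) ≤ 1 := by
      rw [← Finset.card_filter]
      calc (s'.filter (fun x => G.Adj x u)).card ≤ (s.filter (G.Adj u)).card := by
            apply Finset.card_le_card
            intro x hx
            rcases Finset.mem_filter.1 hx with ⟨hx1, hx2⟩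
            exact Finset.mem_filter.2 ⟨mem_of_mem_erase hx1, hx2.symm⟩
        _ ≤ 1 := hdeg
    have hcard : s'.card = s.card - 1 := Finset.card_erase_of_mem hu
    have hpos : 1 ≤ s.card := Finset.card_pos.2 ⟨u, hu⟩
    omega
  · push_neg at hlow
    have hdeg : ∀ u ∈ s, 2 ≤ (s.filter (G.Adj u)).card := fun u hu => hlow u hu
    obtain ⟨a, ha, b, hb, hab⟩ := Finset.one_lt_card.1 (hdeg u0 hu0)
    rcases Finset.mem_filter.1 ha with ⟨has, hua⟩
    rcases Finset.mem_filter.1 hb with ⟨hbs, hub⟩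
    set u := u0 with hu_def
    have hus := hu0
    -- neighbors of a in s are exactly {u, b}
    have hNa : s.filter (G.Adj a) = {u, b} := by
      apply Finset.eq_of_subset_of_card_le
      · intro c hc
        rcases Finset.mem_filter.1 hc with ⟨hcs, hac⟩
        by_cases hcu : c = u
        · simp [hcu]
        · have := hP4 c hcs a has u hus b hbs hac.symm hua.symm hub hcu hab
          simp [this]
      · exact le_trans (le_trans (Finset.card_insert_le _ _) (by simp)) (hdeg a has)
    have hadjab : G.Adj a b := by
      have : b ∈ s.filter (G.Adj a) := by rw [hNa]; simp
      exact (Finset.mem_filter.1 this).2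
    have hNb : s.filter (G.Adj b) = {u, a} := by
      apply Finset.eq_of_subset_of_card_le
      · intro c hc
        rcases Finset.mem_filter.1 hc with ⟨hcs, hbc⟩
        by_cases hcu : c = u
        · simp [hcu]
        · have := hP4 c hcs b hbs u hus a has hbc.symm hub.symm hua hcu (Ne.symm hab)
          simp [this]
      · exact le_trans (le_trans (Finset.card_insert_le _ _) (by simp)) (hdeg b hbs)
    have hNu : s.filter (G.Adj u) = {a, b} := by
      apply Finset.eq_of_subset_of_card_le
      · intro c hc
        rcases Finset.mem_filter.1 hc with ⟨hcs, huc⟩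
        by_cases hca : c = a
        · simp [hca]
        · have := hP4 c hcs u hus a has b hbs huc.symm hua hadjab hca
            (fun h => (G.loopless.irrefl b) (h ▸ hub))
          simp [this]
      · exact le_trans (le_trans (Finset.card_insert_le _ _) (by simp)) (hdeg u hus)
    have hub' : u ≠ b := G.ne_of_adj hub
    have hua' : u ≠ a := G.ne_of_adj hua
    set t : Finset V := {u, a, b} with ht
    have htsub : t ⊆ s := by
      intro x hx
      rcases Finset.mem_insert.1 hx with rfl | hx
      · exact hus
      rcases Finset.mem_insert.1 hx with rfl | hx
      · exact has
      rw [Finset.mem_singleton.1 hx]; exact hbs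
    have htcard : t.card = 3 := by
      rw [ht, Finset.card_insert_of_notMem (by simp [hua', hub']),
        Finset.card_insert_of_notMem (by simp [hab])]
      simp
    set s' := s \ t with hs'
    have hsub : s' ⊂ s := Finset.sdiff_ssubset htsub (by simp [ht])
    have hP4' : ∀ a ∈ s', ∀ b ∈ s', ∀ c ∈ s', ∀ d ∈ s', G.Adj a b → G.Adj b c → G.Adj c d →
        a ≠ c → b ≠ d → a = d := fun a ha b hb c hc d hd =>
      hP4 a (Finset.mem_sdiff.1 ha).1 b (Finset.mem_sdiff.1 hb).1 c (Finset.mem_sdiff.1 hc).1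
        d (Finset.mem_sdiff.1 hd).1
    have ih := IH s' hsub hP4'
    -- for x outside the triangle, its s-neighborhood avoids the triangle
    have houtside : ∀ x ∈ s', s.filter (G.Adj x) = s'.filter (G.Adj x) := by
      intro x hx
      rcases Finset.mem_sdiff.1 hx with ⟨hxs, hxt⟩
      have hxu : x ≠ u := fun h => hxt (by simp [ht, h])
      have hxa : x ≠ a := fun h => hxt (by simp [ht, h])
      have hxb : x ≠ b := fun h => hxt (by simp [ht, h])
      ext y
      simp only [Finset.mem_filter, hs', Finset.mem_sdiff]
      constructor
      · rintro ⟨hys, hxy⟩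
        refine ⟨⟨hys, fun hyt => ?_⟩, hxy⟩
        have hxmem : ∀ z, y = z → x ∈ s.filter (G.Adj z) := fun z hz =>
          Finset.mem_filter.2 ⟨hxs, hz ▸ hxy.symm⟩
        rcases Finset.mem_insert.1 hyt with h | hyt
        · have := hxmem u h; rw [hNu] at this
          rcases Finset.mem_insert.1 this with h' | h'
          · exact hxa h'
          · exact hxb (Finset.mem_singleton.1 h')
        rcases Finset.mem_insert.1 hyt with h | hyt
        · have := hxmem a h; rw [hNa] at this
          rcases Finset.mem_insert.1 this with h' | h'
          · exact hxu h'
          · exact hxb (Finset.mem_singleton.1 h')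
        · have := hxmem b (Finset.mem_singleton.1 hyt); rw [hNb] at this
          rcases Finset.mem_insert.1 this with h' | h'
          · exact hxu h'
          · exact hxa (Finset.mem_singleton.1 h')
      · rintro ⟨⟨hys, _⟩, hxy⟩
        exact ⟨hys, hxy⟩
    have hsum : ∑ x ∈ s, (s.filter (G.Adj x)).card
        = ∑ x ∈ s', (s.filter (G.Adj x)).card + ∑ x ∈ t, (s.filter (G.Adj x)).card :=
      (Finset.sum_sdiff htsub).symm
    have htri : ∑ x ∈ t, (s.filter (G.Adj x)).card = 6 := by
      rw [ht, Finset.sum_insert (by simp [hua', hub']),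
        Finset.sum_insert (by simp [hab]), Finset.sum_singleton, hNu, hNa, hNb]
      rw [Finset.card_insert_of_notMem (by simp [hab]),
        Finset.card_insert_of_notMem (by simp [hub']),
        Finset.card_insert_of_notMem (by simp [hua'])]
      simp
    have hsum2 : ∑ x ∈ s', (s.filter (G.Adj x)).card = ∑ x ∈ s', (s'.filter (G.Adj x)).card :=
      Finset.sum_congr rfl (fun x hx => by rw [houtside x hx])
    have hcard : s'.card = s.card - 3 := by
      rw [hs', Finset.card_sdiff_of_subset htsub, htcard]
    have h3 : 3 ≤ s.card := htcard ▸ Finset.card_le_card htsub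
    omega

-- P4-free neighborhoods
lemma nbhdP4 (G : SimpleGraph (Fin n))
    (hfree : ¬ ∃ f : SimpleGraph.cycleGraph 5 →g G, Function.Injective f)
    (v a b c d : Fin n) (hva : G.Adj v a) (hvb : G.Adj v b) (hvc : G.Adj v c)
    (hvd : G.Adj v d) (hab : G.Adj a b) (hbc : G.Adj b c) (hcd : G.Adj c d)
    (hac : a ≠ c) (hbd : b ≠ d) : a = d := by
  by_contra had
  apply hfree
  refine ⟨⟨![v, a, b, c, d], ?_⟩, ?_⟩
  · intro i j hij
    fin_cases i <;> fin_cases j <;>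
      first
      | exact absurd hij (by decide)
      | simpa using hva
      | simpa using hva.symm
      | simpa using hab
      | simpa using hab.symm
      | simpa using hbc
      | simpa using hbc.symm
      | simpa using hcd
      | simpa using hcd.symm
      | simpa using hvd
      | simpa using hvd.symm
  · have h1 : v ≠ a := G.ne_of_adj hva
    have h2 : v ≠ b := G.ne_of_adj hvb
    have h3 : v ≠ c := G.ne_of_adj hvc
    have h4 : v ≠ d := G.ne_of_adj hvd
    have h5 : a ≠ b := G.ne_of_adj hab
    have h6 : b ≠ c := G.ne_of_adj hbc
    have h7 : c ≠ d := G.ne_of_adj hcd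
    show Function.Injective ![v, a, b, c, d]
    intro i j hij
    fin_cases i <;> fin_cases j <;>
      simp only [Matrix.cons_val_zero, Matrix.cons_val_one,
        Matrix.head_cons, Matrix.cons_val_two, Matrix.tail_cons, Matrix.cons_val_three,
        Matrix.cons_val_four, Matrix.cons_val_succ] at hij ⊢ <;>
      first
      | rfl
      | (exact absurd hij (by assumption))
      | (exact absurd hij.symm (by assumption))
      | simp_all

theorem stmt_2 (n : ℕ) (G : SimpleGraph (Fin n))
    (hfree : ¬ ∃ f : SimpleGraph.cycleGraph 5 →g G, Function.Injective f) :
    3 * (G.cliqueSet 3).ncard ≤ 2 * G.edgeSet.ncard := by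
  classical
  have h1 : G.edgeSet.ncard = G.edgeFinset.card := by
    rw [Set.ncard_eq_toFinset_card']
    congr 1
  have h2 : (G.cliqueSet 3).ncard = (G.cliqueFinset 3).card := by
    rw [Set.ncard_eq_toFinset_card']
    congr 1
    ext t
    simp [SimpleGraph.mem_cliqueFinset_iff, SimpleGraph.mem_cliqueSet_iff]
  set N : Fin n → Finset (Fin n) := fun v => univ.filter (G.Adj v) with hN
  set T3 : Finset (Fin n × Fin n × Fin n) :=
    univ.filter (fun p => G.Adj p.1 p.2.1 ∧ G.Adj p.1 p.2.2 ∧ G.Adj p.2.1 p.2.2) with hT3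
  have hA : T3.card = ∑ v, ∑ x ∈ N v, ((N v).filter (G.Adj x)).card := by
    have ha1 : T3 = univ.biUnion
        (fun v => {v} ×ˢ ((N v ×ˢ N v).filter (fun q => G.Adj q.1 q.2))) := by
      ext p
      obtain ⟨p1, p2, p3⟩ := p
      simp [hT3, hN, Finset.mem_product, and_assoc, Prod.ext_iff]
    rw [ha1, Finset.card_biUnion]
    · apply Finset.sum_congr rfl
      intro v _
      rw [Finset.card_product, Finset.card_singleton, one_mul]
      have ha2 : (N v ×ˢ N v).filter (fun q => G.Adj q.1 q.2)
          = (N v).biUnion (fun x => {x} ×ˢ ((N v).filter (G.Adj x))) := by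
        ext q
        obtain ⟨q1, q2⟩ := q
        simp [Finset.mem_product, and_assoc, Prod.ext_iff]
      rw [ha2, Finset.card_biUnion]
      · apply Finset.sum_congr rfl
        intro x _
        rw [Finset.card_product, Finset.card_singleton, one_mul]
      · intro x _ y _ hxy
        simp only [Finset.disjoint_left]
        rintro q hq hq'
        simp only [Finset.mem_product, Finset.mem_singleton] at hq hq'
        exact hxy (hq.1 ▸ hq'.1.symm ▸ rfl)
    · intro v _ w _ hvw
      simp only [Finset.disjoint_left]
      rintro q hq hq'
      simp only [Finset.mem_product, Finset.mem_singleton] at hq hq'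
      exact hvw (hq.1 ▸ hq'.1.symm ▸ rfl)
  have hB : 6 * (G.cliqueFinset 3).card ≤ T3.card := by
    have hmem : ∀ p ∈ T3, ({p.1, p.2.1, p.2.2} : Finset (Fin n)) ∈ G.cliqueFinset 3 := by
      rintro ⟨p1, p2, p3⟩ hp
      simp only [hT3, Finset.mem_filter, Finset.mem_univ, true_and] at hp
      rw [SimpleGraph.mem_cliqueFinset_iff, SimpleGraph.is3Clique_triple_iff]
      exact hp
    rw [Finset.card_eq_sum_card_fiberwise hmem]
    rw [show 6 * (G.cliqueFinset 3).card = ∑ _t ∈ G.cliqueFinset 3, 6 by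
      rw [Finset.sum_const, smul_eq_mul, mul_comm]]
    apply Finset.sum_le_sum
    intro t ht
    rw [SimpleGraph.mem_cliqueFinset_iff, SimpleGraph.is3Clique_iff] at ht
    obtain ⟨a, b, c, hab, hac, hbc, rfl⟩ := ht
    have hab' : a ≠ b := G.ne_of_adj hab
    have hac' : a ≠ c := G.ne_of_adj hac
    have hbc' : b ≠ c := G.ne_of_adj hbc
    set E : Finset (Fin n × Fin n × Fin n) :=
      {(a,b,c), (a,c,b), (b,a,c), (b,c,a), (c,a,b), (c,b,a)} with hE
    have hEcard : E.card = 6 := by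
      rw [hE]
      rw [Finset.card_insert_of_notMem (by
        simp [Prod.ext_iff, hab', hac', hbc', hab'.symm, hac'.symm, hbc'.symm])]
      rw [Finset.card_insert_of_notMem (by
        simp [Prod.ext_iff, hab', hac', hbc', hab'.symm, hac'.symm, hbc'.symm])]
      rw [Finset.card_insert_of_notMem (by
        simp [Prod.ext_iff, hab', hac', hbc', hab'.symm, hac'.symm, hbc'.symm])]
      rw [Finset.card_insert_of_notMem (by
        simp [Prod.ext_iff, hab', hac', hbc', hab'.symm, hac'.symm, hbc'.symm])]
      rw [Finset.card_insert_of_notMem (by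
        simp [Prod.ext_iff, hab', hac', hbc', hab'.symm, hac'.symm, hbc'.symm])]
      simp
    have hEsub : E ⊆ T3.filter (fun p => ({p.1, p.2.1, p.2.2} : Finset (Fin n)) = {a, b, c}) := by
      intro p hp
      simp only [hE, Finset.mem_insert, Finset.mem_singleton] at hp
      rcases hp with rfl|rfl|rfl|rfl|rfl|rfl
      · exact Finset.mem_filter.2 ⟨Finset.mem_filter.2 ⟨Finset.mem_univ _, hab, hac, hbc⟩, rfl⟩
      · exact Finset.mem_filter.2 ⟨Finset.mem_filter.2 ⟨Finset.mem_univ _, hac, hab, hbc.symm⟩,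
          by ext w; simp; tauto⟩
      · exact Finset.mem_filter.2 ⟨Finset.mem_filter.2 ⟨Finset.mem_univ _, hab.symm, hbc, hac⟩,
          by ext w; simp; tauto⟩
      · exact Finset.mem_filter.2 ⟨Finset.mem_filter.2 ⟨Finset.mem_univ _, hbc, hab.symm, hac.symm⟩,
          by ext w; simp; tauto⟩
      · exact Finset.mem_filter.2 ⟨Finset.mem_filter.2 ⟨Finset.mem_univ _, hac.symm, hbc.symm, hab⟩,
          by ext w; simp; tauto⟩
      · exact Finset.mem_filter.2 ⟨Finset.mem_filter.2 ⟨Finset.mem_univ _, hbc.symm, hac.symm, hab.symm⟩,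
          by ext w; simp; tauto⟩
    calc 6 = E.card := hEcard.symm
      _ ≤ _ := Finset.card_le_card hEsub
  have hC : ∑ v, ∑ x ∈ N v, ((N v).filter (G.Adj x)).card ≤ 4 * G.edgeFinset.card := by
    have hstep : ∀ v, ∑ x ∈ N v, ((N v).filter (G.Adj x)).card ≤ 2 * (N v).card := by
      intro v
      apply keyD
      intro a ha b hb c hc d hd hab hbc hcd hac hbd
      simp only [hN, Finset.mem_filter, Finset.mem_univ, true_and] at ha hb hc hd
      exact nbhdP4 G hfree v a b c d ha hb hc hd hab hbc hcd hac hbd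
    calc ∑ v, ∑ x ∈ N v, ((N v).filter (G.Adj x)).card ≤ ∑ v, 2 * (N v).card :=
          Finset.sum_le_sum (fun v _ => hstep v)
      _ = 2 * ∑ v, G.degree v := by
          rw [Finset.mul_sum]
          apply Finset.sum_congr rfl
          intro v _
          congr 1
          rw [← SimpleGraph.card_neighborFinset_eq_degree]
          congr 1
          ext x
          simp [hN, SimpleGraph.mem_neighborFinset]
      _ = 4 * G.edgeFinset.card := by
          rw [SimpleGraph.sum_degrees_eq_twice_card_edges]; ring
  rw [h1, h2]
  omega
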